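/- If P is a prime m-Dyck path and Q is any m-Dyck path, then for any 1 ≤ j ≤ L(P), the path P ×_j Q is prime. -/

import Mathlib

def stepVal (m : ℕ) (b : Bool) : ℤ := if b then (m : ℤ) else -1

def pathSum (m : ℕ) (P : List Bool) : ℤ := (P.map (stepVal m)).sum

def IsDyck (m : ℕ) (P : List Bool) : Prop :=
  pathSum m P = 0 ∧ ∀ Q : List Bool, Q <+: P → 0 ≤ pathSum m Q

def IsPrimePath (m : ℕ) (P : List Bool) : Prop :=
  P ≠ [] ∧ ¬ ∃ Q R : List Bool, Q ≠ [] ∧ R ≠ [] ∧ IsDyck m Q ∧ IsDyck m R ∧ P = Q ++ R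

/-- `L(P)`: the number of down steps of maximal level, i.e. the trailing down steps. -/
def Ltop (P : List Bool) : ℕ := (P.reverse.takeWhile (fun b => !b)).length

/-- The `j`-th concatenation `P ×_j Q`: insert `Q` before the last `j`
top-level down steps of `P`. -/
def concatAt (P Q : List Bool) (j : ℕ) : List Bool :=
  P.take (P.length - j) ++ Q ++ List.replicate j false

lemma pathSum_append (m : ℕ) (X Y : List Bool) :
    pathSum m (X ++ Y) = pathSum m X + pathSum m Y := by
  simp [pathSum]

lemma pathSum_replicate_false (m k : ℕ) :
    pathSum m (List.replicate k false) = -(k : ℤ) := by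
  induction k with
  | zero => simp [pathSum]
  | succ n ih =>
      rw [List.replicate_succ]
      have : pathSum m (false :: List.replicate n false)
          = pathSum m [false] + pathSum m (List.replicate n false) := by
        simpa using pathSum_append m [false] (List.replicate n false)
      rw [this, ih]
      have h1 : pathSum m [false] = -1 := by simp [pathSum, stepVal]
      rw [h1]; push_cast; ring

/-- split a prefix of an append -/
lemma prefix_append_cases {S X Y : List Bool} (h : S <+: X ++ Y) :
    S <+: X ∨ ∃ T, T <+: Y ∧ S = X ++ T := by
  by_cases hl : S.length ≤ X.length
  · exact Or.inl (List.prefix_of_prefix_length_le h (List.prefix_append X Y) hl)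
  · right
    have hXS : X <+: S :=
      List.prefix_of_prefix_length_le (List.prefix_append X Y) h (le_of_not_ge hl)
    obtain ⟨T, rfl⟩ := hXS
    exact ⟨T, (List.prefix_append_right_inj X).mp h, rfl⟩

lemma prefix_replicate {S : List Bool} {k : ℕ} (h : S <+: List.replicate k false) :
    S = List.replicate S.length false ∧ S.length ≤ k := by
  constructor
  · rw [List.eq_replicate_iff]
    exact ⟨rfl, fun b hb => List.eq_of_mem_replicate (h.subset hb)⟩
  · simpa using h.length_le

lemma pos_of_prime (m : ℕ) (P : List Bool) (hP : IsDyck m P) (hpr : IsPrimePath m P) :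
    ∀ S, S <+: P → S ≠ [] → S ≠ P → 0 < pathSum m S := by
  intro S hS hne hnp
  rcases lt_or_eq_of_le (hP.2 S hS) with h | h
  · exact h
  exfalso
  obtain ⟨R, rfl⟩ := hS
  refine hpr.2 ⟨S, R, hne, ?_, ⟨h.symm, fun T hT => hP.2 T (hT.trans (List.prefix_append S R))⟩,
    ⟨?_, ?_⟩, rfl⟩
  · rintro rfl; simp at hnp
  · have := hP.1
    rw [pathSum_append, ← h] at this
    linarith
  · intro T hT
    have h2 : 0 ≤ pathSum m (S ++ T) :=
      hP.2 _ ((List.prefix_append_right_inj S).mpr hT)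
    rw [pathSum_append, ← h] at h2
    linarith

lemma prime_of_pos (m : ℕ) (P : List Bool) (hP : IsDyck m P) (hne : P ≠ [])
    (h : ∀ S, S <+: P → S ≠ [] → S ≠ P → 0 < pathSum m S) : IsPrimePath m P := by
  refine ⟨hne, ?_⟩
  rintro ⟨X, Y, hX, hY, hXd, hYd, rfl⟩
  have hpos := h X (List.prefix_append X Y) hX (by
    intro hEq
    have hl : X.length = X.length + Y.length := by simpa using congrArg List.length hEq
    have hY0 : Y.length = 0 := by omega
    exact hY (List.length_eq_zero_iff.mp hY0))
  rw [hXd.1] at hpos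
  exact lt_irrefl 0 hpos

lemma split_of_le_Ltop {P : List Bool} {j : ℕ} (h2 : j ≤ Ltop P) :
    P = P.take (P.length - j) ++ List.replicate j false := by
  have hTrep : P.reverse.takeWhile (fun b => !b) = List.replicate (Ltop P) false := by
    rw [List.eq_replicate_iff]
    exact ⟨rfl, fun b hb => by simpa using List.mem_takeWhile_imp hb⟩
  have hrev : P.reverse = List.replicate j false ++
      (List.replicate (Ltop P - j) false ++ P.reverse.dropWhile (fun b => !b)) := by
    conv_lhs => rw [← List.takeWhile_append_dropWhile (p := fun b => !b) (l := P.reverse)]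
    rw [hTrep, ← List.append_assoc, ← List.replicate_add]
    have hj : j + (Ltop P - j) = Ltop P := by omega
    rw [hj]
  set D := (List.replicate (Ltop P - j) false ++ P.reverse.dropWhile (fun b => !b)).reverse
    with hD
  have hP : P = D ++ List.replicate j false := by
    have := congrArg List.reverse hrev
    simpa [List.reverse_append, hD] using this
  have hlen : D.length = P.length - j := by
    have := congrArg List.length hP
    simp at this
    omega
  conv_lhs => rw [hP]
  congr 1
  rw [← hlen, hP, List.take_left]

/-- If `P` is a prime `m`-Dyck path and `Q` any `m`-Dyck path, then for
`1 ≤ j ≤ L(P)`, the `m`-Dyck path `P ×_j Q` is prime. -/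
theorem concat_prime (m : ℕ) (hm : 1 ≤ m) (P Q : List Bool)
    (hP : IsDyck m P) (hPprime : IsPrimePath m P) (hQ : IsDyck m Q)
    (j : ℕ) (h1 : 1 ≤ j) (h2 : j ≤ Ltop P) :
    IsDyck m (concatAt P Q j) ∧ IsPrimePath m (concatAt P Q j) := by
  set B := P.take (P.length - j) with hBdef
  have hPB : P = B ++ List.replicate j false := split_of_le_Ltop h2
  have hC : concatAt P Q j = B ++ Q ++ List.replicate j false := rfl
  have hBsum : pathSum m B = (j : ℤ) := by
    have := hP.1
    rw [hPB, pathSum_append, pathSum_replicate_false] at this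
    linarith
  have hBproper : B ≠ P := by
    intro hEq
    have := congrArg List.length hPB
    rw [← hEq] at this
    simp at this
    omega
  -- positivity of nonempty prefixes of B
  have hBpos : ∀ S, S <+: B → S ≠ [] → 0 < pathSum m S := by
    intro S hS hne
    have hSP : S <+: P := by rw [hPB]; exact hS.trans (List.prefix_append B _)
    refine pos_of_prime m P hP hPprime S hSP hne ?_
    intro rfl'
    subst rfl'
    have h1' := hS.length_le
    have := congrArg List.length hPB
    simp at this
    omega
  -- every prefix of concatAt is ≥ 0, and proper nonempty ones are > 0
  have key : ∀ S, S <+: concatAt P Q j →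
      (0 ≤ pathSum m S) ∧ (S ≠ [] → S ≠ concatAt P Q j → 0 < pathSum m S) := by
    intro S hS
    rw [hC, List.append_assoc] at hS
    rcases prefix_append_cases hS with hS1 | ⟨T, hT, rfl⟩
    · -- prefix of B
      rcases eq_or_ne S [] with rfl | hne
      · simp [pathSum]
      · have := hBpos S hS1 hne
        exact ⟨le_of_lt this, fun _ _ => this⟩
    · rcases prefix_append_cases hT with hT1 | ⟨U, hU, rfl⟩
      · -- B ++ (prefix of Q)
        have hTQ : 0 ≤ pathSum m T := hQ.2 T hT1
        rw [pathSum_append, hBsum]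
        constructor
        · have : (0:ℤ) < j := by exact_mod_cast h1
          linarith
        · intro _ _
          have : (0:ℤ) < j := by exact_mod_cast h1
          linarith
      · -- B ++ Q ++ (prefix of replicate j false)
        obtain ⟨hUrep, hUle⟩ := prefix_replicate hU
        rw [← List.append_assoc, pathSum_append, pathSum_append, hBsum, hQ.1, hUrep,
          pathSum_replicate_false]
        constructor
        · have : (U.length : ℤ) ≤ j := by exact_mod_cast hUle
          linarith
        · intro _ hnp
          have hlt : U.length < j := by
            rcases lt_or_eq_of_le hUle with h | h
            · exact h
            · exfalso
              apply hnp
              rw [hC, h]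
          have : (U.length : ℤ) < j := by exact_mod_cast hlt
          linarith
  have hCne : concatAt P Q j ≠ [] := by
    rw [hC]
    intro hEq
    have := congrArg List.length hEq
    simp at this
    omega
  have hCsum : pathSum m (concatAt P Q j) = 0 := by
    rw [hC, pathSum_append, pathSum_append, hBsum, hQ.1, pathSum_replicate_false]
    ring
  have hCd : IsDyck m (concatAt P Q j) := ⟨hCsum, fun S hS => (key S hS).1⟩
  exact ⟨hCd, prime_of_pos m _ hCd hCne (fun S hS hne hnp => (key S hS).2 hne hnp)⟩
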